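/- Let D_1, ..., D_i, a_1, ..., a_i be 2i mutually independent random variables with values in F_q, where each D_j has the sparse distribution with parameter p' and each a_j has the sparse distribution with parameter p_0. Then for every t in F_q, Pr{D_1 a_1 + D_2 a_2 + ... + D_i a_i = t} = β_i(p_0 + (1 - p_0)p', t). -/

import Mathlib

open MeasureTheory ProbabilityTheory

/-- A random variable `X` with values in a finite field `F` has the sparse distribution
with parameter `p` if `Pr{X = 0} = p` and `Pr{X = t} = (1 - p)/(q - 1)` for each nonzero
`t`, where `q` is the cardinality of `F`. -/
def HasSparseDist {Ω F : Type*} [MeasurableSpace Ω] [Fintype F] [Zero F]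
    (μ : Measure Ω) (X : Ω → F) (p : ℝ) : Prop :=
  (μ {ω | X ω = 0}).toReal = p ∧
  ∀ t : F, t ≠ 0 → (μ {ω | X ω = t}).toReal = (1 - p) / ((Fintype.card F : ℝ) - 1)

/-- `β_k(p, t)` from the paper: the probability that a sum of `k` i.i.d. sparse random
variables over a field of size `q` equals `t`. -/
noncomputable def beta {F : Type*} [Zero F] [DecidableEq F]
    (q : ℝ) (k : ℕ) (p : ℝ) (t : F) : ℝ :=
  if t = 0 then (1 / q) * (1 + (q - 1) * (1 - q * (1 - p) / (q - 1)) ^ k)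
  else (1 / q) * (1 - (1 - q * (1 - p) / (q - 1)) ^ k)

section Aux

variable {Ω F : Type*} [MeasurableSpace Ω] [Field F] [Fintype F] [DecidableEq F]
  [MeasurableSpace F] [MeasurableSingletonClass F]

/-- Convolution: probability that `g (X ω) (Y ω) = t` for independent `X, Y`. -/
lemma aux_indep_prob_eq (μ : Measure Ω) [IsProbabilityMeasure μ] (X Y : Ω → F)
    (hX : Measurable X) (hY : Measurable Y) (h : IndepFun X Y μ) (g : F → F → F) (t : F) :
    (μ {ω | g (X ω) (Y ω) = t}).toReal =
      ∑ x : F, ∑ y : F, (if g x y = t then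
        (μ {ω | X ω = x}).toReal * (μ {ω | Y ω = y}).toReal else 0) := by
  classical
  have hset : {ω | g (X ω) (Y ω) = t}
      = ⋃ p ∈ ((Finset.univ : Finset (F × F)).filter (fun p => g p.1 p.2 = t)),
          (X ⁻¹' {p.1} ∩ Y ⁻¹' {p.2}) := by
    ext ω
    simp only [Set.mem_setOf_eq, Set.mem_iUnion, Finset.mem_filter, Finset.mem_univ, true_and,
      Set.mem_inter_iff, Set.mem_preimage, Set.mem_singleton_iff]
    constructor
    · intro hω; exact ⟨(X ω, Y ω), hω, rfl, rfl⟩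
    · rintro ⟨p, hp, h1, h2⟩; rw [← h1, ← h2] at hp; exact hp
  have hmeas : ∀ p ∈ ((Finset.univ : Finset (F × F)).filter (fun p => g p.1 p.2 = t)),
      MeasurableSet (X ⁻¹' {p.1} ∩ Y ⁻¹' {p.2}) := fun p _ =>
    (hX (measurableSet_singleton _)).inter (hY (measurableSet_singleton _))
  have hdisj : Set.PairwiseDisjoint
      (((Finset.univ : Finset (F × F)).filter (fun p => g p.1 p.2 = t)) : Set (F × F))
      (fun p => X ⁻¹' {p.1} ∩ Y ⁻¹' {p.2}) := by
    intro p _ p' _ hpp'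
    refine Set.disjoint_left.2 ?_
    rintro ω ⟨h1, h2⟩ ⟨h3, h4⟩
    exact hpp' (by cases p; cases p'; simp_all)
  rw [hset, measure_biUnion_finset hdisj hmeas]
  rw [ENNReal.toReal_sum (fun p _ => (measure_ne_top μ _))]
  rw [Finset.sum_filter, Fintype.sum_prod_type]
  refine Finset.sum_congr rfl fun x _ => Finset.sum_congr rfl fun y _ => ?_
  by_cases hxy : g x y = t
  · simp only [hxy, if_true]
    rw [h.measure_inter_preimage_eq_mul _ _ (measurableSet_singleton _)
      (measurableSet_singleton _), ENNReal.toReal_mul]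
    rfl
  · simp [hxy]

lemma aux_sum_prob_eq_one (μ : Measure Ω) [IsProbabilityMeasure μ] (X : Ω → F)
    (hX : Measurable X) : ∑ s : F, (μ {ω | X ω = s}).toReal = 1 := by
  have h := sum_measure_preimage_singleton (μ := μ) (Finset.univ : Finset F)
    (fun y _ => hX (measurableSet_singleton y))
  simp only [Finset.coe_univ, Set.preimage_univ, measure_univ] at h
  have : ∑ s : F, (μ (X ⁻¹' {s})).toReal = 1 := by
    rw [← ENNReal.toReal_sum (fun s _ => measure_ne_top μ _), h, ENNReal.toReal_one]
  simpa [Set.preimage, Set.mem_singleton_iff] using this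

lemma aux_sparse_eval {μ : Measure Ω} {X : Ω → F} {p : ℝ} (h : HasSparseDist μ X p) (s : F) :
    (μ {ω | X ω = s}).toReal = if s = 0 then p else (1 - p) / ((Fintype.card F : ℝ) - 1) := by
  by_cases hs : s = 0
  · simp [hs, h.1]
  · simp [hs, h.2 s hs]

lemma aux_card_facts : (2 : ℝ) ≤ (Fintype.card F : ℝ) := by
  exact_mod_cast Fintype.one_lt_card

lemma aux_sum_split_zero (f : F → ℝ) (c : ℝ) (hc : ∀ s : F, s ≠ 0 → f s = c) :
    ∑ s : F, f s = f 0 + ((Fintype.card F : ℝ) - 1) * c := by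
  classical
  rw [Finset.sum_eq_sum_sdiff_singleton_add (Finset.mem_univ (0 : F))]
  have h1 : ∑ s ∈ Finset.univ \ {(0 : F)}, f s = ∑ s ∈ Finset.univ \ {(0 : F)}, c :=
    Finset.sum_congr rfl fun s hs => hc s (by simpa using (Finset.mem_sdiff.1 hs).2)
  have hcard : (1 : ℕ) ≤ Fintype.card F := Fintype.card_pos
  rw [h1, Finset.sum_const, nsmul_eq_mul, Finset.card_sdiff_of_subset (by simp), Finset.card_univ,
    Finset.card_singleton, Nat.cast_sub hcard]
  push_cast
  ring

/-- the betas sum to 1 -/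
lemma aux_sum_beta (k : ℕ) (p : ℝ) :
    ∑ s : F, beta (Fintype.card F : ℝ) k p s = 1 := by
  classical
  set q : ℝ := (Fintype.card F : ℝ) with hq
  have h2 : (2:ℝ) ≤ q := aux_card_facts (F := F)
  have hq0 : q ≠ 0 := by linarith
  have hq1 : q - 1 ≠ 0 := by intro h; linarith
  rw [aux_sum_split_zero (beta q k p) ((1/q) * (1 - (1 - q * (1 - p) / (q - 1)) ^ k))
    (fun s hs => by simp [_root_.beta, hs])]
  simp only [_root_.beta, if_true, if_pos rfl]
  field_simp
  ring

lemma aux_beta_step (k : ℕ) (p : ℝ) (t : F) :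
    ∑ s : F, beta (Fintype.card F : ℝ) k p s *
      (if t - s = 0 then p else (1 - p) / ((Fintype.card F : ℝ) - 1))
      = beta (Fintype.card F : ℝ) (k + 1) p t := by
  classical
  set q : ℝ := (Fintype.card F : ℝ) with hq
  have h2 : (2:ℝ) ≤ q := aux_card_facts (F := F)
  have hq0 : q ≠ 0 := by linarith
  have hq1 : q - 1 ≠ 0 := by intro h; linarith
  have hcond : ∀ s : F, (t - s = 0) = (s = t) := by
    intro s; simp [sub_eq_zero, eq_comm]
  simp only [hcond]
  rw [Finset.sum_eq_sum_sdiff_singleton_add (Finset.mem_univ t)]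
  simp only [if_pos rfl]
  have h1 : ∑ s ∈ Finset.univ \ {t}, beta q k p s * (if s = t then p else (1 - p) / (q - 1))
      = (∑ s ∈ Finset.univ \ {t}, beta q k p s) * ((1 - p) / (q - 1)) := by
    rw [Finset.sum_mul]
    refine Finset.sum_congr rfl fun s hs => ?_
    have : s ≠ t := by simpa using (Finset.mem_sdiff.1 hs).2
    simp [this]
  rw [h1]
  have h3 : ∑ s ∈ Finset.univ \ {t}, beta q k p s = 1 - beta q k p t := by
    have := Finset.sum_eq_sum_sdiff_singleton_add (Finset.mem_univ t) (beta q k p)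
    have htot : ∑ s : F, beta q k p s = 1 := aux_sum_beta k p
    linarith [this ▸ htot]
  rw [h3]
  by_cases ht : t = 0 <;> simp only [_root_.beta, ht, if_true, if_false, pow_succ] <;>
    · field_simp
      ring

lemma aux_prob_zero_of_const (μ : Measure Ω) [IsProbabilityMeasure μ] (X : Ω → F)
    (hX : Measurable X) (c : ℝ) (h : ∀ t : F, t ≠ 0 → (μ {ω | X ω = t}).toReal = c) :
    (μ {ω | X ω = 0}).toReal = 1 - ((Fintype.card F : ℝ) - 1) * c := by
  have htot := aux_sum_prob_eq_one μ X hX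
  rw [aux_sum_split_zero (fun s => (μ {ω | X ω = s}).toReal) c h] at htot
  linarith

lemma aux_mul_sparse (μ : Measure Ω) [IsProbabilityMeasure μ] (X Y : Ω → F)
    (hX : Measurable X) (hY : Measurable Y) (h : IndepFun X Y μ)
    (p' p₀ : ℝ) (hXd : HasSparseDist μ X p') (hYd : HasSparseDist μ Y p₀) :
    HasSparseDist μ (fun ω => X ω * Y ω) (p₀ + (1 - p₀) * p') := by
  classical
  set q : ℝ := (Fintype.card F : ℝ) with hq
  have h2 : (2:ℝ) ≤ q := aux_card_facts (F := F)
  have hq0 : q ≠ 0 := by linarith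
  have hq1 : q - 1 ≠ 0 := by intro h; linarith
  have hne : ∀ t : F, t ≠ 0 → (μ {ω | X ω * Y ω = t}).toReal
      = (1 - (p₀ + (1 - p₀) * p')) / (q - 1) := by
    intro t ht
    rw [aux_indep_prob_eq μ X Y hX hY h (· * ·) t]
    have hinner : ∀ x : F, (∑ y : F, if x * y = t then
        (μ {ω | X ω = x}).toReal * (μ {ω | Y ω = y}).toReal else 0)
        = if x = 0 then 0 else (μ {ω | X ω = x}).toReal * (μ {ω | Y ω = x⁻¹ * t}).toReal := by
      intro x
      by_cases hx : x = 0
      · simp [hx, ht.symm]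
      · have hcond : ∀ y : F, (x * y = t) = (y = x⁻¹ * t) := by
          intro y
          simp only [eq_iff_iff]
          constructor
          · intro hxy; field_simp [← hxy]; rw [mul_comm]; exact hxy
          · intro hxy; rw [hxy]; field_simp
        simp only [hcond, hx, if_false]
        rw [Finset.sum_ite_eq' Finset.univ (x⁻¹ * t)
          (fun y => (μ {ω | X ω = x}).toReal * (μ {ω | Y ω = y}).toReal)]
        simp
    rw [Finset.sum_congr rfl fun x _ => hinner x]
    have hval : ∀ x : F, x ≠ 0 → (if x = 0 then 0 else
        (μ {ω | X ω = x}).toReal * (μ {ω | Y ω = x⁻¹ * t}).toReal)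
        = (1 - p') / (q - 1) * ((1 - p₀) / (q - 1)) := by
      intro x hx
      have hxt : x⁻¹ * t ≠ 0 := by
        simp [mul_ne_zero, inv_ne_zero hx, ht]
      simp [hx, hXd.2 x hx, hYd.2 _ hxt, hq]
    rw [aux_sum_split_zero _ _ hval]
    simp only [eq_self_iff_true, if_true, zero_add, ← hq]
    field_simp
    ring
  constructor
  · have := aux_prob_zero_of_const μ (fun ω => X ω * Y ω) (hX.mul hY) _
      (fun t ht => hne t ht)
    rw [this]
    field_simp
    rw [← hq]
    ring
  · exact hne


lemma aux_add_conv (μ : Measure Ω) [IsProbabilityMeasure μ] (X Y : Ω → F)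
    (hX : Measurable X) (hY : Measurable Y) (h : IndepFun X Y μ) (t : F) :
    (μ {ω | X ω + Y ω = t}).toReal =
      ∑ x : F, (μ {ω | X ω = x}).toReal * (μ {ω | Y ω = t - x}).toReal := by
  rw [aux_indep_prob_eq μ X Y hX hY h (· + ·) t]
  refine Finset.sum_congr rfl fun x _ => ?_
  have hcond : ∀ y : F, (x + y = t) = (y = t - x) := by
    intro y; simp only [eq_iff_iff]
    constructor
    · intro hxy; rw [← hxy]; ring
    · intro hxy; rw [hxy]; ring
  simp only [hcond]
  rw [Finset.sum_ite_eq' Finset.univ (t - x)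
    (fun y => (μ {ω | X ω = x}).toReal * (μ {ω | Y ω = y}).toReal)]
  simp

end Aux


/-- if `D 1, …, D i, a 1, …, a i` are `2i` mutually independent random
variables over `F_q`, the `D j` sparse with parameter `p'` and the `a j` sparse with
parameter `p₀`, then `Pr{∑ j, D j * a j = t} = β_i(p₀ + (1 - p₀) p', t)`. -/
theorem sum_of_products_of_sparse {Ω F : Type*} [MeasurableSpace Ω]
    [Field F] [Fintype F] [DecidableEq F]
    [MeasurableSpace F] [MeasurableSingletonClass F]
    (μ : Measure Ω) [IsProbabilityMeasure μ]
    (i : ℕ) (D a : Fin i → Ω → F) (p' p₀ : ℝ)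
    (hp'0 : 0 ≤ p') (hp'1 : p' ≤ 1) (hp₀0 : 0 ≤ p₀) (hp₀1 : p₀ ≤ 1)
    (hDmeas : ∀ j, Measurable (D j)) (hameas : ∀ j, Measurable (a j))
    (hindep : iIndepFun (Sum.elim D a) μ)
    (hD : ∀ j, HasSparseDist μ (D j) p')
    (ha : ∀ j, HasSparseDist μ (a j) p₀)
    (t : F) :
    (μ {ω | ∑ j, D j ω * a j ω = t}).toReal =
      beta (Fintype.card F : ℝ) i (p₀ + (1 - p₀) * p') t := by
  classical
  set q : ℝ := (Fintype.card F : ℝ) with hq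
  have h2 : (2:ℝ) ≤ q := aux_card_facts (F := F)
  have hq0 : q ≠ 0 := by linarith
  set p : ℝ := p₀ + (1 - p₀) * p' with hp
  have hfmeas : ∀ x : Fin i ⊕ Fin i, Measurable (Sum.elim D a x) := by
    rintro (x | x)
    · exact hDmeas x
    · exact hameas x
  have key : ∀ k (hk : k ≤ i) (t : F),
      (μ {ω | ∑ j : Fin k, D (Fin.castLE hk j) ω * a (Fin.castLE hk j) ω = t}).toReal
        = beta q k p t := by
    intro k
    induction k with
    | zero =>
      intro hk t
      simp only [Finset.univ_eq_empty, Finset.sum_empty]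
      by_cases ht : t = 0
      · subst ht
        have : {ω : Ω | (0 : F) = 0} = Set.univ := by ext ω; simp
        rw [this, measure_univ, ENNReal.toReal_one]
        simp only [_root_.beta, eq_self_iff_true, if_true, pow_zero, mul_one]
        field_simp
        ring
      · have : {ω : Ω | (0 : F) = t} = ∅ := by ext ω; simp [Ne.symm ht]
        rw [this, measure_empty]
        simp [_root_.beta, ht]
    | succ k ih =>
      intro hk t
      have hk' : k ≤ i := Nat.le_of_succ_le hk
      have hki : k < i := hk
      set jk : Fin i := ⟨k, hki⟩ with hjk
      set S : Ω → F := fun ω => ∑ j : Fin k, D (Fin.castLE hk' j) ω * a (Fin.castLE hk' j) ω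
        with hS
      set P : Ω → F := fun ω => D jk ω * a jk ω with hP
      have hSmeas : Measurable S := by
        apply Finset.measurable_sum
        intro j _
        exact (hDmeas _).mul (hameas _)
      have hPmeas : Measurable P := (hDmeas _).mul (hameas _)
      -- independence of S and P
      have hSP : IndepFun S P μ := by
        set Sset : Finset (Fin i ⊕ Fin i) :=
          (Finset.univ.image (fun j : Fin k => Sum.inl (Fin.castLE hk' j))) ∪
          (Finset.univ.image (fun j : Fin k => Sum.inr (Fin.castLE hk' j))) with hSset
        set Tset : Finset (Fin i ⊕ Fin i) := {Sum.inl jk, Sum.inr jk} with hTset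
        have hdisj : Disjoint Sset Tset := by
          rw [Finset.disjoint_left]
          intro x hxS hxT
          simp only [hSset, Finset.mem_union, Finset.mem_image, Finset.mem_univ, true_and]
            at hxS
          simp only [hTset, Finset.mem_insert, Finset.mem_singleton] at hxT
          rcases hxT with rfl | rfl <;> rcases hxS with ⟨j, hj⟩ | ⟨j, hj⟩
          · have : (j : ℕ) = k := congrArg Fin.val (Sum.inl.inj hj); omega
          · exact absurd hj (by simp)
          · exact absurd hj (by simp)
          · have : (j : ℕ) = k := congrArg Fin.val (Sum.inr.inj hj); omega
        have h0 := hindep.indepFun_finset Sset Tset hdisj hfmeas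
        have hmemS : ∀ j : Fin k, Sum.inl (Fin.castLE hk' j) ∈ Sset := by
          intro j; simp [hSset]
        have hmemS' : ∀ j : Fin k, Sum.inr (Fin.castLE hk' j) ∈ Sset := by
          intro j; simp [hSset]
        have hmemT1 : Sum.inl jk ∈ Tset := by simp [hTset]
        have hmemT2 : Sum.inr jk ∈ Tset := by simp [hTset]
        set g1 : (↥Sset → F) → F := fun x => ∑ j : Fin k,
          x ⟨Sum.inl (Fin.castLE hk' j), hmemS j⟩ * x ⟨Sum.inr (Fin.castLE hk' j), hmemS' j⟩
          with hg1def
        set g2 : (↥Tset → F) → F := fun x => x ⟨Sum.inl jk, hmemT1⟩ * x ⟨Sum.inr jk, hmemT2⟩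
          with hg2def
        have hg1 : Measurable g1 := Measurable.of_discrete
        have hg2 : Measurable g2 := Measurable.of_discrete
        exact h0.comp hg1 hg2
      have hPd : HasSparseDist μ P p := by
        have hDa : IndepFun (D jk) (a jk) μ :=
          hindep.indepFun (i := Sum.inl jk) (j := Sum.inr jk) (by simp)
        exact aux_mul_sparse μ (D jk) (a jk) (hDmeas jk) (hameas jk) hDa p' p₀ (hD jk) (ha jk)
      have hsetEq2 : {ω | ∑ j : Fin (k+1), D (Fin.castLE hk j) ω * a (Fin.castLE hk j) ω = t}
          = {ω | S ω + P ω = t} := by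
        ext ω
        simp only [Set.mem_setOf_eq, Fin.sum_univ_castSucc]
        exact Iff.rfl
      rw [hsetEq2, aux_add_conv μ S P hSmeas hPmeas hSP t]
      have hv1 : ∀ x : F, (μ {ω | S ω = x}).toReal = beta q k p x := fun x => ih hk' x
      have hv2 : ∀ x : F, (μ {ω | P ω = t - x}).toReal
          = if t - x = 0 then p else (1 - p) / (q - 1) := fun x => aux_sparse_eval hPd (t - x)
      simp only [hv1, hv2]
      rw [hq]
      exact aux_beta_step k p t
  have hfin := key i le_rfl t
  have hsetEq : {ω | ∑ j : Fin i, D (Fin.castLE le_rfl j) ω * a (Fin.castLE le_rfl j) ω = t}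
      = {ω | ∑ j, D j ω * a j ω = t} := by
    ext ω
    simp [Fin.castLE]
  rw [← hsetEq]
  exact hfin
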